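/- MOSS integral estimate: For every real ζ with 0 < ζ ≤ 2, ∫_ζ^4 1/(1 − e^{−y²/8}) dy ≤ 32/(3ζ). -/

import Mathlib

lemma moss_pointwise (y : ℝ) (hy : 0 < y) :
    1 / (1 - Real.exp (-y ^ 2 / 8)) ≤ 8 / y ^ 2 + 1 := by
  have hx : 0 < y ^ 2 / 8 := by positivity
  have hexp : y ^ 2 / 8 + 1 ≤ Real.exp (y ^ 2 / 8) := Real.add_one_le_exp _
  have hpos : 0 < Real.exp (y ^ 2 / 8) := Real.exp_pos _
  have hne : Real.exp (-y ^ 2 / 8) = (Real.exp (y ^ 2 / 8))⁻¹ := by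
    rw [← Real.exp_neg]; ring_nf
  have hlt : Real.exp (-y ^ 2 / 8) < 1 := by
    rw [Real.exp_lt_one_iff]; nlinarith
  have hden : 0 < 1 - Real.exp (-y ^ 2 / 8) := by linarith
  have key : (1 + y ^ 2 / 8) * Real.exp (-y ^ 2 / 8) ≤ 1 := by
    rw [hne, ← div_eq_mul_inv, div_le_one hpos]; linarith
  have h3 : 1 / (1 - Real.exp (-y ^ 2 / 8)) ≤ (8 + y ^ 2) / y ^ 2 := by
    rw [div_le_div_iff₀ hden (by positivity)]
    nlinarith [key, hden, hx]
  have h4 : (8 + y ^ 2) / y ^ 2 = 8 / y ^ 2 + 1 := by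
    field_simp
  linarith [h4 ▸ h3]

/-- **MOSS integral estimate.** For every real `0 < ζ ≤ 2`,
`∫_ζ^4 1/(1 - e^{-y²/8}) dy ≤ 32/(3ζ)`. -/
theorem moss_integral_estimate (ζ : ℝ) (hζ0 : 0 < ζ) (hζ2 : ζ ≤ 2) :
    ∫ y in ζ..4, 1 / (1 - Real.exp (-y ^ 2 / 8)) ≤ 32 / (3 * ζ) := by
  have hζ4 : ζ ≤ 4 := by linarith
  have huIcc : Set.uIcc ζ 4 = Set.Icc ζ 4 := Set.uIcc_of_le hζ4
  have hmem : ∀ y ∈ Set.uIcc ζ 4, 0 < y := by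
    intro y hy
    rw [huIcc] at hy
    linarith [hy.1]
  have hcf : ContinuousOn (fun y : ℝ => 1 / (1 - Real.exp (-y ^ 2 / 8))) (Set.uIcc ζ 4) := by
    apply ContinuousOn.div continuousOn_const
    · exact (continuous_const.sub
        (Real.continuous_exp.comp (((continuous_pow 2).neg).div_const 8))).continuousOn
    · intro y hy
      have hy0 := hmem y hy
      have : Real.exp (-y ^ 2 / 8) < 1 := by
        rw [Real.exp_lt_one_iff]
        nlinarith
      linarith
  have hif : IntervalIntegrable (fun y : ℝ => 1 / (1 - Real.exp (-y ^ 2 / 8)))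
      MeasureTheory.volume ζ 4 := hcf.intervalIntegrable
  have hcg : ContinuousOn (fun y : ℝ => 8 / y ^ 2 + 1) (Set.uIcc ζ 4) := by
    apply ContinuousOn.add _ continuousOn_const
    apply ContinuousOn.div continuousOn_const (continuous_pow 2).continuousOn
    intro y hy
    have := hmem y hy
    positivity
  have hig : IntervalIntegrable (fun y : ℝ => 8 / y ^ 2 + 1)
      MeasureTheory.volume ζ 4 := hcg.intervalIntegrable
  have hmono : ∫ y in ζ..4, 1 / (1 - Real.exp (-y ^ 2 / 8)) ≤
      ∫ y in ζ..4, 8 / y ^ 2 + 1 := by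
    apply intervalIntegral.integral_mono_on hζ4 hif hig
    intro y hy
    exact moss_pointwise y (by rw [← huIcc] at hy; exact hmem y hy)
  have hderiv : ∀ y ∈ Set.uIcc ζ 4,
      HasDerivAt (fun y : ℝ => -8 / y + y) (8 / y ^ 2 + 1) y := by
    intro y hy
    have hy0 : y ≠ 0 := (hmem y hy).ne'
    have h1 : HasDerivAt (fun y : ℝ => -8 / y) (8 / y ^ 2) y := by
      have h := (hasDerivAt_inv hy0).const_mul (-8 : ℝ)
      simp only [div_eq_mul_inv]
      convert h using 1
      · rfl
      · rfl
      · ring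
    exact h1.add (hasDerivAt_id' y)
  have hcalc : ∫ y in ζ..4, 8 / y ^ 2 + 1 = (-8 / 4 + 4) - (-8 / ζ + ζ) :=
    intervalIntegral.integral_eq_sub_of_hasDerivAt hderiv hig
  rw [hcalc] at hmono
  have hfin : (-8 / 4 + 4) - (-8 / ζ + ζ) ≤ 32 / (3 * ζ) := by
    rw [le_div_iff₀ (by positivity : (0:ℝ) < 3 * ζ)]
    have hexpand : ((-8:ℝ) / 4 + 4 - (-8 / ζ + ζ)) * (3 * ζ) = 6 * ζ + 24 - 3 * ζ ^ 2 := by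
      field_simp
      ring
    rw [hexpand]
    nlinarith [sq_nonneg (ζ - 1)]
  linarith
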